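/- (Generalized Alon-Friedland-Kalai Lemma, equality criterion) With R a DVR with maximal ideal p, residue field of size q, v ≥ 1, S(v) a set of coset representatives of p^v, T ⊂ R finite nonempty with pairwise differences units, T̄ the image of T in S(v), P(x,v,T) = Π_{y ∈ S(v)\T̄}(x-y), and c(v) = Σ_{i=1}^{v-1}(q^i-1): for any x ∈ R, ord_p P(x,v,T) = c(v) if and only if there exists t ∈ T with ord_p(x - t) ≥ v. -/

import Mathlib

open IsLocalRing

theorem stmt7 (R : Type*) [CommRing R] [IsDomain R] [IsDiscreteValuationRing R]
    [DecidableEq R] [Fintype (ResidueField R)]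
    (q : ℕ) (hq : q = Fintype.card (ResidueField R))
    (v : ℕ) (hv : 1 ≤ v)
    (S : Finset R)
    (hS : ∀ x : R, ∃! s : R, s ∈ S ∧ x - s ∈ (maximalIdeal R) ^ v)
    (T : Finset R) (hT : T.Nonempty)
    (hTF : ∀ x ∈ T, ∀ y ∈ T, x ≠ y → IsUnit (x - y))
    (Tbar : Finset R)
    (hTbar : ∀ s : R, s ∈ Tbar ↔ s ∈ S ∧ ∃ t ∈ T, t - s ∈ (maximalIdeal R) ^ v)
    (x : R) (c : ℕ) (hc : c = ∑ i ∈ Finset.Ico 1 v, (q ^ i - 1)) :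
    ((∏ y ∈ S \ Tbar, (x - y)) ∈ (maximalIdeal R) ^ c ∧
        (∏ y ∈ S \ Tbar, (x - y)) ∉ (maximalIdeal R) ^ (c + 1)) ↔
      ∃ t ∈ T, x - t ∈ (maximalIdeal R) ^ v := by
  classical
  obtain ⟨ϖ, hϖ⟩ := IsDiscreteValuationRing.exists_irreducible R
  have hϖp : Prime ϖ := UniqueFactorizationMonoid.irreducible_iff_prime.mp hϖ
  have hspan : maximalIdeal R = Ideal.span {ϖ} :=
    (IsDiscreteValuationRing.irreducible_iff_uniformizer ϖ).mp hϖ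
  have hmem : ∀ (z : R) (n : ℕ), z ∈ (maximalIdeal R) ^ n ↔ (n : ℕ∞) ≤ emultiplicity ϖ z := by
    intro z n
    rw [hspan, Ideal.span_singleton_pow, Ideal.mem_span_singleton]
    exact pow_dvd_iff_le_emultiplicity
  have huniq : ∀ z y1 y2 : R, y1 ∈ S → y2 ∈ S → z - y1 ∈ (maximalIdeal R) ^ v →
      z - y2 ∈ (maximalIdeal R) ^ v → y1 = y2 := by
    intro z y1 y2 h1 h2 h3 h4
    obtain ⟨w, -, hu⟩ := hS z
    rw [hu y1 ⟨h1, h3⟩, hu y2 ⟨h2, h4⟩]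
  have hTsub : ∀ y ∈ Tbar, y ∈ S := fun y hy => ((hTbar y).mp hy).1
  have hq1 : 0 < q := hq ▸ Fintype.card_pos
  -- cardinality of quotients
  have hcard : ∀ i : ℕ, Nat.card (R ⧸ (maximalIdeal R) ^ i) = q ^ i := by
    intro i
    have h1 : Submodule.cardQuot ((maximalIdeal R : Ideal R) ^ i)
        = Submodule.cardQuot (maximalIdeal R) ^ i :=
      cardQuot_pow_of_prime (IsDiscreteValuationRing.not_a_field R)
    have h2 : Submodule.cardQuot (maximalIdeal R : Ideal R) = q := by
      rw [Submodule.cardQuot_apply, hq]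
      exact Nat.card_eq_fintype_card (α := ResidueField R)
    rw [← Submodule.cardQuot_apply, h1, h2]
  -- fiber counting
  have hfiber : ∀ (z : R), ∀ i : ℕ, i ≤ v →
      (S.filter (fun y => z - y ∈ (maximalIdeal R) ^ i)).card = q ^ (v - i) := by
    intro z i hi
    have hJI : ((maximalIdeal R) ^ v : Ideal R) ≤ (maximalIdeal R) ^ i :=
      Ideal.pow_le_pow_right hi
    have hbij : Nat.card (Submodule.map ((maximalIdeal R : Ideal R) ^ v).mkQ
          ((maximalIdeal R : Ideal R) ^ i))
        = (S.filter (fun y => z - y ∈ (maximalIdeal R) ^ i)).card := by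
      rw [← Nat.card_eq_finsetCard]
      refine Nat.card_congr (Equiv.symm (Equiv.ofBijective
        (fun y => ⟨((maximalIdeal R : Ideal R) ^ v).mkQ (z - y.1), Submodule.mem_map_of_mem
          (Finset.mem_filter.mp y.2).2⟩) ⟨?_, ?_⟩))
      · rintro ⟨y1, hy1⟩ ⟨y2, hy2⟩ h
        have h' : (z - y1) - (z - y2) ∈ ((maximalIdeal R) ^ v : Ideal R) := by
          rw [← Submodule.Quotient.eq]
          exact congrArg Subtype.val h
        have h'' : y2 - y1 ∈ ((maximalIdeal R) ^ v : Ideal R) := by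
          have : (z - y1) - (z - y2) = y2 - y1 := by ring
          rwa [this] at h'
        have := huniq y2 y1 y2 (Finset.mem_filter.mp hy1).1 (Finset.mem_filter.mp hy2).1 h''
          (by rw [sub_self]; exact zero_mem _)
        exact Subtype.ext this
      · rintro ⟨w, hw⟩
        obtain ⟨u, huI, hu⟩ := Submodule.mem_map.mp hw
        obtain ⟨y, ⟨hyS, hy⟩, -⟩ := hS (z - u)
        have hzy : z - y ∈ ((maximalIdeal R) ^ i : Ideal R) := by
          have : z - y = u + ((z - u) - y) := by ring
          rw [this]
          exact add_mem huI (hJI hy)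
        refine ⟨⟨y, Finset.mem_filter.mpr ⟨hyS, hzy⟩⟩, Subtype.ext ?_⟩
        show ((maximalIdeal R : Ideal R) ^ v).mkQ (z - y) = w
        rw [← hu]
        rw [Submodule.mkQ_apply, Submodule.mkQ_apply, Submodule.Quotient.eq]
        have : z - y - u = (z - u) - y := by ring
        rwa [this]
    have h2 := Submodule.card_quotient_mul_card_quotient (M := R)
      ((maximalIdeal R : Ideal R) ^ i) ((maximalIdeal R) ^ v) hJI
    rw [hbij, hcard i, hcard v] at h2
    have h3 : q ^ (v - i) * q ^ i = q ^ v := by rw [← pow_add]; congr 1; omega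
    exact Nat.eq_of_mul_eq_mul_right (pow_pos hq1 i) (by rw [h2, h3])
  obtain ⟨s, ⟨hsS, hsx⟩, -⟩ := hS x
  -- emultiplicity as a filter card
  have hval : ∀ y, y ∈ S → y ≠ s →
      emultiplicity ϖ (x - y) =
        (((Finset.Ico 1 v).filter (fun i => x - y ∈ (maximalIdeal R) ^ i)).card : ℕ∞) := by
    intro y hyS hys
    have hnv : ¬ ((v : ℕ∞) ≤ emultiplicity ϖ (x - y)) := by
      rw [← hmem]
      intro hmemv
      exact hys (huniq x y s hyS hsS hmemv hsx)
    have hfin : emultiplicity ϖ (x - y) ≠ ⊤ := fun h => hnv (h ▸ le_top)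
    obtain ⟨m, hm⟩ : ∃ m : ℕ, emultiplicity ϖ (x - y) = (m : ℕ∞) := by
      lift emultiplicity ϖ (x - y) to ℕ using hfin with m
      exact ⟨m, rfl⟩
    have hmv : m < v := by
      by_contra hcon
      apply hnv
      rw [hm]
      exact_mod_cast Nat.le_of_not_lt hcon
    have hset : (Finset.Ico 1 v).filter (fun i => x - y ∈ (maximalIdeal R) ^ i)
        = Finset.Ico 1 (m + 1) := by
      ext i
      simp only [Finset.mem_filter, Finset.mem_Ico]
      constructor
      · rintro ⟨⟨h1, h2⟩, h3⟩
        have h4 : (i : ℕ∞) ≤ (m : ℕ∞) := hm ▸ (hmem _ i).mp h3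
        have h5 : i ≤ m := by exact_mod_cast h4
        omega
      · rintro ⟨h1, h2⟩
        refine ⟨⟨h1, by omega⟩, (hmem _ i).mpr ?_⟩
        rw [hm]
        exact_mod_cast (by omega : i ≤ m)
    rw [hset, Nat.card_Ico, hm]
    norm_num
  -- total valuation over S.erase s
  have hsum : ∑ y ∈ S.erase s, emultiplicity ϖ (x - y) = (c : ℕ∞) := by
    rw [Finset.sum_congr rfl (fun y hy => hval y (Finset.mem_of_mem_erase hy)
      (Finset.ne_of_mem_erase hy)), ← Nat.cast_sum]
    congr 1
    have h2 : ∑ y ∈ S.erase s,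
          ((Finset.Ico 1 v).filter (fun i => x - y ∈ (maximalIdeal R) ^ i)).card
        = ∑ i ∈ Finset.Ico 1 v,
          ((S.erase s).filter (fun y => x - y ∈ (maximalIdeal R) ^ i)).card := by
      simp_rw [Finset.card_filter]
      rw [Finset.sum_comm]
    rw [h2]
    have h3 : ∀ i ∈ Finset.Ico 1 v,
        ((S.erase s).filter (fun y => x - y ∈ (maximalIdeal R) ^ i)).card
          = q ^ (v - i) - 1 := by
      intro i hi
      obtain ⟨hi1, hi2⟩ := Finset.mem_Ico.mp hi
      have hsmem : s ∈ S.filter (fun y => x - y ∈ (maximalIdeal R) ^ i) :=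
        Finset.mem_filter.mpr ⟨hsS, Ideal.pow_le_pow_right (le_of_lt hi2) hsx⟩
      rw [Finset.filter_erase, Finset.card_erase_of_mem hsmem, hfiber x i (le_of_lt hi2)]
    rw [Finset.sum_congr rfl h3, hc]
    refine Finset.sum_nbij' (fun i => v - i) (fun i => v - i) ?_ ?_ ?_ ?_ ?_ <;>
      intro a ha <;>
      first
        | rfl
        | (simp only [Finset.mem_Ico] at ha ⊢; omega)
  -- the key disjointness lemma
  have hL : ∀ y ∈ Tbar, ∀ y' ∈ Tbar, y ≠ y' → ϖ ∣ x - y → ϖ ∣ x - y' → False := by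
    intro y hy y' hy' hne h1 h2
    obtain ⟨hyS, t, htT, hty⟩ := (hTbar y).mp hy
    obtain ⟨hy'S, t', ht'T, hty'⟩ := (hTbar y').mp hy'
    by_cases htt : t = t'
    · subst htt
      exact hne (huniq t y y' hyS hy'S hty hty')
    · have hu := hTF t htT t' ht'T htt
      have hp1 : ((maximalIdeal R) ^ v : Ideal R) ≤ maximalIdeal R := by
        conv_rhs => rw [← pow_one (maximalIdeal R)]
        exact Ideal.pow_le_pow_right hv
      have d1 : x - y ∈ maximalIdeal R := by
        rw [hspan, Ideal.mem_span_singleton]; exact h1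
      have d2 : x - y' ∈ maximalIdeal R := by
        rw [hspan, Ideal.mem_span_singleton]; exact h2
      have hmemtt : t - t' ∈ maximalIdeal R := by
        have e1 : t - t' = ((t - y) - (x - y) + (x - y')) - (t' - y') := by ring
        rw [e1]
        exact sub_mem (add_mem (sub_mem (hp1 hty) d1) d2) (hp1 hty')
      exact (mem_maximalIdeal _).mp hmemtt hu
  by_cases hEx : ∃ t ∈ T, x - t ∈ (maximalIdeal R) ^ v
  · simp only [hEx, iff_true]
    obtain ⟨t, htT, hxt⟩ := hEx
    have hsTbar : s ∈ Tbar := (hTbar s).mpr ⟨hsS, t, htT, by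
      have e : t - s = (x - s) - (x - t) := by ring
      rw [e]; exact sub_mem hsx hxt⟩
    have hds : ϖ ∣ x - s := by
      have h1 := (hmem (x - s) v).mp hsx
      have h2 : ((1 : ℕ) : ℕ∞) ≤ emultiplicity ϖ (x - s) :=
        le_trans (by exact_mod_cast hv) h1
      simpa using pow_dvd_of_le_emultiplicity h2
    have hsplit : S.erase s = (S \ Tbar) ∪ (Tbar.erase s) := by
      ext y
      simp only [Finset.mem_erase, Finset.mem_sdiff, Finset.mem_union]
      constructor
      · rintro ⟨hys, hyS⟩
        by_cases hyT : y ∈ Tbar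
        · exact Or.inr ⟨hys, hyT⟩
        · exact Or.inl ⟨hyS, hyT⟩
      · rintro (⟨hyS, hyT⟩ | ⟨hys, hyT⟩)
        · exact ⟨fun h => hyT (h ▸ hsTbar), hyS⟩
        · exact ⟨hys, hTsub y hyT⟩
    have hdisj : Disjoint (S \ Tbar) (Tbar.erase s) := by
      rw [Finset.disjoint_left]
      intro a ha hb
      exact (Finset.mem_sdiff.mp ha).2 (Finset.mem_of_mem_erase hb)
    have hzero : ∑ y ∈ Tbar.erase s, emultiplicity ϖ (x - y) = 0 :=
      Finset.sum_eq_zero fun y hy => emultiplicity_eq_zero.mpr fun hd =>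
        hL y (Finset.mem_of_mem_erase hy) s hsTbar (Finset.ne_of_mem_erase hy) hd hds
    have hPE : emultiplicity ϖ (∏ y ∈ S \ Tbar, (x - y)) = (c : ℕ∞) := by
      rw [Finset.emultiplicity_prod hϖp]
      have := hsum
      rw [hsplit, Finset.sum_union hdisj, hzero, add_zero] at this
      exact this
    constructor
    · exact (hmem _ c).mpr (le_of_eq hPE.symm)
    · rw [hmem, hPE]
      intro hcon
      exact absurd (by exact_mod_cast hcon) (Nat.not_succ_le_self c)
  · simp only [hEx, iff_false]
    rintro ⟨-, hnot⟩
    apply hnot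
    rw [hmem]
    have hsBar : s ∉ Tbar := by
      intro hs
      obtain ⟨-, t, htT, hts⟩ := (hTbar s).mp hs
      refine hEx ⟨t, htT, ?_⟩
      have e : x - t = (x - s) - (t - s) := by ring
      rw [e]; exact sub_mem hsx hts
    have hsSd : s ∈ S \ Tbar := Finset.mem_sdiff.mpr ⟨hsS, hsBar⟩
    rw [Finset.emultiplicity_prod hϖp, ← Finset.add_sum_erase _ _ hsSd]
    have hsplit : S.erase s = ((S \ Tbar).erase s) ∪ Tbar := by
      ext y
      simp only [Finset.mem_erase, Finset.mem_sdiff, Finset.mem_union]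
      constructor
      · rintro ⟨hys, hyS⟩
        by_cases hyT : y ∈ Tbar
        · exact Or.inr hyT
        · exact Or.inl ⟨hys, hyS, hyT⟩
      · rintro (⟨hys, hyS, -⟩ | hyT)
        · exact ⟨hys, hyS⟩
        · exact ⟨fun h => hsBar (h ▸ hyT), hTsub y hyT⟩
    have hdisj : Disjoint ((S \ Tbar).erase s) Tbar := by
      rw [Finset.disjoint_left]
      intro a ha hb
      exact (Finset.mem_sdiff.mp (Finset.mem_of_mem_erase ha)).2 hb
    have hAB : (∑ y ∈ (S \ Tbar).erase s, emultiplicity ϖ (x - y))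
        + (∑ y ∈ Tbar, emultiplicity ϖ (x - y)) = (c : ℕ∞) := by
      rw [← Finset.sum_union hdisj, ← hsplit, hsum]
    have hB : (∑ y ∈ Tbar, emultiplicity ϖ (x - y)) ≤ ((v - 1 : ℕ) : ℕ∞) := by
      by_cases hy0 : ∃ y0 ∈ Tbar, ϖ ∣ (x - y0)
      · obtain ⟨y0, hy0T, hdvd⟩ := hy0
        rw [← Finset.add_sum_erase _ _ hy0T]
        have hz : ∑ y ∈ Tbar.erase y0, emultiplicity ϖ (x - y) = 0 :=
          Finset.sum_eq_zero fun y hy => emultiplicity_eq_zero.mpr fun hd =>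
            hL y (Finset.mem_of_mem_erase hy) y0 hy0T (Finset.ne_of_mem_erase hy) hd hdvd
        rw [hz, add_zero]
        have hy0S := hTsub y0 hy0T
        have hy0s : y0 ≠ s := fun h => hsBar (h ▸ hy0T)
        rw [hval y0 hy0S hy0s]
        have hle : ((Finset.Ico 1 v).filter
            (fun i => x - y0 ∈ (maximalIdeal R) ^ i)).card ≤ v - 1 := by
          refine le_trans (Finset.card_filter_le _ _) ?_
          rw [Nat.card_Ico]
        exact_mod_cast hle
      · push_neg at hy0
        rw [Finset.sum_eq_zero fun y hy => emultiplicity_eq_zero.mpr (hy0 y hy)]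
        exact zero_le
    have hes : (v : ℕ∞) ≤ emultiplicity ϖ (x - s) := (hmem _ v).mp hsx
    have hAne : (∑ y ∈ (S \ Tbar).erase s, emultiplicity ϖ (x - y)) ≠ ⊤ := by
      intro h
      rw [h, top_add] at hAB
      exact (WithTop.top_ne_coe) hAB
    have hBne : (∑ y ∈ Tbar, emultiplicity ϖ (x - y)) ≠ ⊤ := by
      intro h
      rw [h, add_top] at hAB
      exact (WithTop.top_ne_coe) hAB
    obtain ⟨a, ha⟩ : ∃ a : ℕ, (∑ y ∈ (S \ Tbar).erase s, emultiplicity ϖ (x - y)) = (a : ℕ∞) := by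
      lift (∑ y ∈ (S \ Tbar).erase s, emultiplicity ϖ (x - y)) to ℕ using hAne with a
      exact ⟨a, rfl⟩
    obtain ⟨b, hb⟩ : ∃ b : ℕ, (∑ y ∈ Tbar, emultiplicity ϖ (x - y)) = (b : ℕ∞) := by
      lift (∑ y ∈ Tbar, emultiplicity ϖ (x - y)) to ℕ using hBne with b
      exact ⟨b, rfl⟩
    rw [ha, hb] at hAB
    rw [hb] at hB
    rw [ha]
    have hab : a + b = c := by exact_mod_cast hAB
    have hbv : b ≤ v - 1 := by exact_mod_cast hB
    have hkey : c + 1 ≤ v + a := by omega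
    calc ((c + 1 : ℕ) : ℕ∞) ≤ ((v + a : ℕ) : ℕ∞) := by exact_mod_cast hkey
      _ = (v : ℕ∞) + (a : ℕ∞) := by push_cast; ring
      _ ≤ emultiplicity ϖ (x - s) + (a : ℕ∞) := add_le_add_left hes _
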